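/- Let p, q, r, s be integers with p > 0 and qs + pr = 1, and let α₁⁰, α₂⁰ be nonzero integers with gcd(α₁⁰,α₂⁰) = 1. Set u := gcd(p, sα₁⁰ − α₂⁰), α := p/u, α₁' := (sα₁⁰ − α₂⁰)/u, α₁ := α·α₁⁰ and α₂ := α·α₂⁰. Let β₁, β₁' be integers with α₁β₁' − β₁α₁' = 1, and set β₂ := −sβ₁ + pβ₁'. Then gcd(α₂, β₂) = 1. -/

import Mathlib

/-- In the algorithm constructing a Seifert fibration of `L(p,q)` from coprime
nonzero integers `α₁⁰, α₂⁰`: with `u = gcd(p, sα₁⁰ − α₂⁰)`, `α = p/u`,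
`α₁' = (sα₁⁰ − α₂⁰)/u`, `α₁ = α·α₁⁰`, `α₂ = α·α₂⁰`, `α₁β₁' − β₁α₁' = 1` and
`β₂ = −sβ₁ + pβ₁'`, the pair `(α₂, β₂)` satisfies `gcd(α₂,β₂) = 1`. -/
theorem algorithm_allowable_invariant (p q r s α₁₀ α₂₀ : ℤ)
    (hp : 0 < p) (hdet : q * s + p * r = 1)
    (hα₁₀ : α₁₀ ≠ 0) (hα₂₀ : α₂₀ ≠ 0) (hcop : Int.gcd α₁₀ α₂₀ = 1)
    (u α α₁' α₁ α₂ : ℤ)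
    (hu : u = Int.gcd p (s * α₁₀ - α₂₀))
    (hα : α = p / u)
    (hα₁' : α₁' = (s * α₁₀ - α₂₀) / u)
    (hα₁ : α₁ = α * α₁₀) (hα₂ : α₂ = α * α₂₀)
    (β₁ β₁' β₂ : ℤ)
    (hβ : α₁ * β₁' - β₁ * α₁' = 1)
    (hβ₂ : β₂ = -s * β₁ + p * β₁') :
    Int.gcd α₂ β₂ = 1 := by
  have hud1 : u ∣ p := hu ▸ Int.gcd_dvd_left p (s * α₁₀ - α₂₀)
  have hud2 : u ∣ (s * α₁₀ - α₂₀) := hu ▸ Int.gcd_dvd_right p (s * α₁₀ - α₂₀)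
  have hpe : p = u * α := by rw [hα]; exact (Int.mul_ediv_cancel' hud1).symm
  have hte : s * α₁₀ - α₂₀ = u * α₁' := by
    rw [hα₁']; exact (Int.mul_ediv_cancel' hud2).symm
  have key : s * α₁ - α₂ = p * α₁' := by
    rw [hα₁, hα₂, hpe]; linear_combination α * hte
  have hs : α₂ * β₁' + α₁' * β₂ = s := by
    rw [hβ₂]; linear_combination s * hβ - β₁' * key
  have hp2 : α₁ * β₂ + α₂ * β₁ = p := by
    rw [hβ₂]; linear_combination p * hβ - β₁ * key
  have hds : (Int.gcd α₂ β₂ : ℤ) ∣ s :=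
    hs ▸ dvd_add ((Int.gcd_dvd_left α₂ β₂).mul_right _) ((Int.gcd_dvd_right α₂ β₂).mul_left _)
  have hdp : (Int.gcd α₂ β₂ : ℤ) ∣ p :=
    hp2 ▸ dvd_add ((Int.gcd_dvd_right α₂ β₂).mul_left _) ((Int.gcd_dvd_left α₂ β₂).mul_right _)
  have hone : (Int.gcd α₂ β₂ : ℤ) ∣ 1 :=
    hdet ▸ dvd_add (hds.mul_left q) (hdp.mul_right r)
  exact Nat.dvd_one.mp (Int.ofNat_dvd.mp (by exact_mod_cast hone))
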